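/- There is an absolute constant c₀ such that the following holds for all c ≥ c₀. Let n ≥ 2, let α ∈ (0,1] and let k ≥ 2 be an integer with e^{−k} < α, let L ≥ ln n be a positive integer, and suppose m1 := (c/64)k² is a positive integer. Let X_0,…,X_{m1·L − 1} be independent {0,1}-valued random variables with P(X_r = 1) = p(r) = 1/√(⌊r/L⌋+1), and let Y⊤ = ∑_{r=0}^{m1·L − 1} X_r. Then P(Y⊤ > (3/5)·√c·k·L) < (1/c²)·n^{−8·ln(4/α)}. -/

import Mathlib

open MeasureTheory

/-- Probability of a one at position `r` in the random matrix construction with block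
length `L`: `p(r) = 1/√(⌊r/L⌋+1)` (natural-number division is floor division). -/
noncomputable def pval (L r : ℕ) : ℝ := 1 / Real.sqrt (((r / L : ℕ) : ℝ) + 1)

/-- The Bernoulli measure on `Bool` with parameter `p`. -/
noncomputable def bern (p : ℝ) : Measure Bool :=
  ENNReal.ofReal p • Measure.dirac true + ENNReal.ofReal (1 - p) • Measure.dirac false

lemma pval_pos (L r : ℕ) : 0 < pval L r := by
  unfold pval
  positivity

lemma pval_le_one (L r : ℕ) : pval L r ≤ 1 := by
  unfold pval
  rw [div_le_one (by positivity)]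
  have h : (0:ℝ) ≤ ((r / L : ℕ) : ℝ) := Nat.cast_nonneg _
  nlinarith [Real.sq_sqrt (by linarith : (0:ℝ) ≤ ((r / L : ℕ) : ℝ) + 1),
    Real.sqrt_nonneg (((r / L : ℕ) : ℝ) + 1)]

lemma bern_apply_singleton (p : ℝ) (b : Bool) :
    bern p {b} = ENNReal.ofReal (if b then p else 1 - p) := by
  cases b <;>
    simp [bern, Measure.dirac_apply]

lemma bern_isProb {p : ℝ} (h0 : 0 ≤ p) (h1 : p ≤ 1) : IsProbabilityMeasure (bern p) := by
  constructor
  simp only [bern, Measure.add_apply, Measure.smul_apply, measure_univ, smul_eq_mul, mul_one]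
  rw [← ENNReal.ofReal_add h0 (by linarith)]
  norm_num

lemma ofReal_prod {ι : Type*} (s : Finset ι) (f : ι → ℝ) (h : ∀ i ∈ s, 0 ≤ f i) :
    ENNReal.ofReal (∏ i ∈ s, f i) = ∏ i ∈ s, ENNReal.ofReal (f i) := by
  classical
  induction s using Finset.induction_on with
  | empty => simp
  | insert a s hnotmem ih =>
    rw [Finset.prod_insert hnotmem, Finset.prod_insert hnotmem,
      ENNReal.ofReal_mul (h a (Finset.mem_insert_self a s)),
      ih (fun i hi => h i (Finset.mem_insert_of_mem hi))]

/-- The pi measure of an arbitrary event on `Fin N → Bool` as a finite sum of weights. -/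
lemma measure_pi_bern {N : ℕ} (p : Fin N → ℝ) (h0 : ∀ r, 0 ≤ p r) (h1 : ∀ r, p r ≤ 1)
    (P : (Fin N → Bool) → Prop) [DecidablePred P] :
    Measure.pi (fun r => bern (p r)) {ω | P ω}
      = ENNReal.ofReal (∑ ω ∈ Finset.univ.filter P,
          ∏ r, (if ω r then p r else 1 - p r)) := by
  haveI : ∀ r, IsProbabilityMeasure (bern (p r)) := fun r => bern_isProb (h0 r) (h1 r)
  have hset : {ω | P ω} = ⋃ ω ∈ Finset.univ.filter P, ({ω} : Set (Fin N → Bool)) := by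
    ext ω; simp
  rw [hset, measure_biUnion_finset]
  · rw [ENNReal.ofReal_sum_of_nonneg]
    · apply Finset.sum_congr rfl
      intro ω _
      have : ({ω} : Set (Fin N → Bool)) = Set.pi Set.univ (fun r => {ω r}) := by
        rw [Set.univ_pi_singleton]
      rw [this, Measure.pi_pi]
      rw [ofReal_prod _ _ (fun r _ => by
        by_cases h : ω r <;> simp [h] <;> [exact h0 r; linarith [h1 r]])]
      apply Finset.prod_congr rfl
      intro r _
      rw [bern_apply_singleton]
    · intro ω _
      apply Finset.prod_nonneg
      intro r _
      by_cases h : ω r <;> simp [h] <;> [exact h0 r; linarith [h1 r]]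
  · intro x _ y _ hxy
    simp [Set.disjoint_singleton, hxy]
  · intro b _
    exact measurableSet_singleton b

/-- Chernoff bound with `t = log 2` over the finite cube. -/
lemma chernoff_sum {N : ℕ} (p : Fin N → ℝ) (h0 : ∀ r, 0 ≤ p r) (h1 : ∀ r, p r ≤ 1)
    (a : ℝ) [DecidablePred fun ω : Fin N → Bool =>
      a < ∑ r, (if ω r = true then (1 : ℝ) else 0)] :
    ∑ ω ∈ Finset.univ.filter (fun ω : Fin N → Bool =>
        a < ∑ r, (if ω r = true then (1 : ℝ) else 0)),
      ∏ r, (if ω r then p r else 1 - p r)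
    ≤ Real.exp ((∑ r, p r) - Real.log 2 * a) := by
  set t : ℝ := Real.log 2 with ht
  have ht0 : 0 < t := Real.log_pos (by norm_num)
  set g : Fin N → Bool → ℝ := fun r b =>
    (if b then p r else 1 - p r) * Real.exp (t * (if b = true then (1:ℝ) else 0)) with hg
  have hWnn : ∀ ω : Fin N → Bool, 0 ≤ ∏ r, (if ω r then p r else 1 - p r) := by
    intro ω
    apply Finset.prod_nonneg
    intro r _
    by_cases h : ω r <;> simp [h] <;> [exact h0 r; linarith [h1 r]]
  have hgnn : ∀ (r) (b), 0 ≤ g r b := by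
    intro r b
    apply mul_nonneg _ (Real.exp_nonneg _)
    by_cases h : b <;> simp [h] <;> [exact h0 r; linarith [h1 r]]
  have key : ∀ ω : Fin N → Bool,
      (∏ r, g r (ω r))
        = (∏ r, (if ω r then p r else 1 - p r))
            * Real.exp (t * ∑ r, (if ω r = true then (1:ℝ) else 0)) := by
    intro ω
    rw [hg]
    rw [Finset.prod_mul_distrib, ← Real.exp_sum, Finset.mul_sum]
  calc
    ∑ ω ∈ Finset.univ.filter (fun ω : Fin N → Bool =>
        a < ∑ r, (if ω r = true then (1 : ℝ) else 0)),
      ∏ r, (if ω r then p r else 1 - p r)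
      ≤ ∑ ω ∈ Finset.univ.filter (fun ω : Fin N → Bool =>
          a < ∑ r, (if ω r = true then (1 : ℝ) else 0)),
        (∏ r, g r (ω r)) * Real.exp (-(t * a)) := by
        apply Finset.sum_le_sum
        intro ω hω
        rw [Finset.mem_filter] at hω
        rw [key ω, mul_assoc, ← Real.exp_add]
        apply le_mul_of_one_le_right (hWnn ω)
        rw [Real.one_le_exp_iff]
        nlinarith [mul_pos ht0 (sub_pos.mpr hω.2)]
    _ ≤ ∑ ω : Fin N → Bool, (∏ r, g r (ω r)) * Real.exp (-(t * a)) := by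
        apply Finset.sum_le_sum_of_subset_of_nonneg (Finset.filter_subset _ _)
        intro ω _ _
        exact mul_nonneg (Finset.prod_nonneg fun r _ => hgnn r (ω r)) (Real.exp_nonneg _)
    _ = (∏ r, (g r false + g r true)) * Real.exp (-(t * a)) := by
        rw [← Finset.sum_mul]
        congr 1
        have := Finset.prod_univ_sum (fun _ : Fin N => (Finset.univ : Finset Bool)) g
        rw [Fintype.piFinset_univ] at this
        rw [← this]
        apply Finset.prod_congr rfl
        intro r _
        rw [Fintype.sum_bool]
        ring
    _ ≤ (∏ r, Real.exp (p r)) * Real.exp (-(t * a)) := by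
        apply mul_le_mul_of_nonneg_right _ (Real.exp_nonneg _)
        apply Finset.prod_le_prod
        · intro r _
          exact add_nonneg (hgnn r false) (hgnn r true)
        · intro r _
          have h2 : Real.exp t = 2 := Real.exp_log (by norm_num)
          have hf : g r false = 1 - p r := by simp [hg]
          have htr : g r true = p r * 2 := by simp [hg, h2]
          have : g r false + g r true = 1 + p r := by rw [hf, htr]; ring
          rw [this]
          linarith [Real.add_one_le_exp (p r)]
    _ = Real.exp ((∑ r, p r) - t * a) := by
        rw [← Real.exp_sum, ← Real.exp_add]
        ring_nf

/-- Sum of `pval` over the first `m` blocks. -/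
lemma sum_pval_le (L : ℕ) (m : ℕ) :
    ∑ r ∈ Finset.range (m * L), pval L r ≤ 2 * Real.sqrt m * L := by
  induction m with
  | zero => simp
  | succ m ih =>
    have hsplit : ∑ r ∈ Finset.range (m * L), pval L r
        + ∑ r ∈ Finset.Ico (m * L) ((m + 1) * L), pval L r
        = ∑ r ∈ Finset.range ((m + 1) * L), pval L r := by
      simp only [Finset.range_eq_Ico]
      exact Finset.sum_Ico_consecutive _ (Nat.zero_le _)
        (Nat.mul_le_mul_right _ (Nat.le_succ m))
    have hIco : ∑ r ∈ Finset.Ico (m * L) ((m + 1) * L), pval L r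
        = L * (1 / Real.sqrt (m + 1)) := by
      have hconst : ∀ r ∈ Finset.Ico (m * L) ((m + 1) * L),
          pval L r = 1 / Real.sqrt ((m : ℝ) + 1) := by
        intro r hr
        rw [Finset.mem_Ico] at hr
        unfold pval
        rw [Nat.div_eq_of_lt_le hr.1 hr.2]
      rw [Finset.sum_congr rfl hconst, Finset.sum_const, Nat.card_Ico,
        show (m + 1) * L - m * L = L by rw [Nat.succ_mul, Nat.add_sub_cancel_left],
        nsmul_eq_mul]
    rw [← hsplit, hIco]
    have hy : (0:ℝ) < Real.sqrt (m + 1) := Real.sqrt_pos.mpr (by positivity)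
    have hstep : (L : ℝ) * (1 / Real.sqrt (m + 1))
        ≤ 2 * (Real.sqrt (m + 1) - Real.sqrt m) * L := by
      have hx : (0:ℝ) ≤ Real.sqrt m := Real.sqrt_nonneg _
      have hx2 : Real.sqrt m ^ 2 = (m : ℝ) := Real.sq_sqrt (by positivity)
      have hy2 : Real.sqrt (m + 1) ^ 2 = (m : ℝ) + 1 := Real.sq_sqrt (by positivity)
      have h1 : 1 / Real.sqrt (m + 1) ≤ 2 * (Real.sqrt (m + 1) - Real.sqrt m) := by
        rw [div_le_iff₀ hy]
        nlinarith [sq_nonneg (Real.sqrt (m + 1) - Real.sqrt m)]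
      have hL0 : (0:ℝ) ≤ (L : ℝ) := Nat.cast_nonneg _
      nlinarith
    push_cast
    push_cast at ih hstep
    nlinarith [ih, hstep]

set_option maxHeartbeats 2000000 in
/-- Chernoff-type upper-tail bound on the weight `Y⊤` of the upper segment
`[0, m1·L)` of a random column: there is an absolute constant `c₀` such that for all
`c ≥ c₀`, `P(Y⊤ > (3/5)·√c·k·L) < (1/c²)·n^{−8·ln(4/α)}`, where the coordinates
`X_0, …, X_{m1·L−1}` are independent Bernoulli(`p(r)`) variables. -/
theorem stmt11 :
    ∃ c₀ : ℝ, ∀ c : ℝ, c₀ ≤ c →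
      ∀ n : ℕ, 2 ≤ n → ∀ α : ℝ, 0 < α → α ≤ 1 →
        ∀ k : ℕ, 2 ≤ k → Real.exp (-(k : ℝ)) < α →
          ∀ L : ℕ, 0 < L → Real.log n ≤ (L : ℝ) →
            ∀ m1 : ℕ, 0 < m1 → (m1 : ℝ) = c / 64 * (k : ℝ) ^ 2 →
              (Measure.pi fun r : Fin (m1 * L) => bern (pval L r.val))
                  {ω : Fin (m1 * L) → Bool |
                    (3 / 5 : ℝ) * Real.sqrt c * (k : ℝ) * (L : ℝ)
                      < ∑ r : Fin (m1 * L), (if ω r = true then (1 : ℝ) else 0)}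
                < ENNReal.ofReal
                    (1 / c ^ 2 * (n : ℝ) ^ (-(8 * Real.log (4 / α)))) := by
  classical
  use 1000000
  intro c hc n hn α hα0 hα1 k hk hαk L hL hLn m1 hm1 hm1eq
  have hc0 : (0:ℝ) < c := by linarith
  have hp0' : ∀ r : Fin (m1 * L), 0 ≤ pval L r.val := fun r => (pval_pos L r.val).le
  have hp1' : ∀ r : Fin (m1 * L), pval L r.val ≤ 1 := fun r => pval_le_one L r.val
  have hmeas : (Measure.pi fun r : Fin (m1 * L) => bern (pval L r.val))
      {ω : Fin (m1 * L) → Bool |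
        (3 / 5 : ℝ) * Real.sqrt c * (k : ℝ) * (L : ℝ)
          < ∑ r : Fin (m1 * L), (if ω r = true then (1 : ℝ) else 0)}
      = ENNReal.ofReal (∑ ω ∈ Finset.univ.filter
          (fun ω : Fin (m1 * L) → Bool =>
            (3 / 5 : ℝ) * Real.sqrt c * (k : ℝ) * (L : ℝ)
              < ∑ r : Fin (m1 * L), (if ω r = true then (1 : ℝ) else 0)),
          ∏ r, (if ω r then pval L r.val else 1 - pval L r.val)) :=
    measure_pi_bern _ hp0' hp1' _
  rw [hmeas]
  have hchern := chernoff_sum (fun r : Fin (m1 * L) => pval L r.val) hp0' hp1'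
      ((3 / 5 : ℝ) * Real.sqrt c * (k : ℝ) * (L : ℝ))
  -- elementary facts
  have hs : (1000:ℝ) ≤ Real.sqrt c := by
    have h1 : Real.sqrt 1000000 = 1000 := by
      rw [show (1000000:ℝ) = 1000 ^ 2 by norm_num]
      exact Real.sqrt_sq (by norm_num)
    calc (1000:ℝ) = Real.sqrt 1000000 := h1.symm
      _ ≤ Real.sqrt c := Real.sqrt_le_sqrt hc
  set s : ℝ := Real.sqrt c with hs_def
  have hs0 : (0:ℝ) < s := by linarith
  have hsq : s ^ 2 = c := Real.sq_sqrt hc0.le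
  have hk2 : (2:ℝ) ≤ (k:ℝ) := by exact_mod_cast hk
  have hL1 : (1:ℝ) ≤ (L:ℝ) := by exact_mod_cast hL
  -- bound on the sum of the probabilities
  have hm1' : Real.sqrt (m1:ℝ) = s / 8 * k := by
    rw [hm1eq, show c / 64 * (k:ℝ) ^ 2 = (s / 8 * (k:ℝ)) ^ 2 by
      rw [mul_pow, div_pow, hsq]; norm_num]
    exact Real.sqrt_sq (by positivity)
  have hsum : ∑ r : Fin (m1 * L), pval L r.val ≤ s * k * L / 4 := by
    calc ∑ r : Fin (m1 * L), pval L r.val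
        = ∑ r ∈ Finset.range (m1 * L), pval L r :=
          Fin.sum_univ_eq_sum_range (fun r => pval L r) (m1 * L)
      _ ≤ 2 * Real.sqrt (m1:ℝ) * L := sum_pval_le L m1
      _ = s * k * L / 4 := by rw [hm1']; ring
  -- numeric bounds
  have hss : Real.sqrt s ≤ s / 31 := by
    have h31 : (31:ℝ) ≤ Real.sqrt s := by
      have : Real.sqrt 961 = 31 := by
        rw [show (961:ℝ) = 31 ^ 2 by norm_num]; exact Real.sqrt_sq (by norm_num)
      calc (31:ℝ) = Real.sqrt 961 := this.symm
        _ ≤ Real.sqrt s := Real.sqrt_le_sqrt (by linarith)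
    have hsq' : Real.sqrt s ^ 2 = s := Real.sq_sqrt hs0.le
    nlinarith [Real.sqrt_nonneg s]
  have hlogc : Real.log c ≤ 4 * (s / 31) := by
    have hsps : (0:ℝ) < Real.sqrt s := Real.sqrt_pos.mpr hs0
    have e0 : Real.log s = 2 * Real.log (Real.sqrt s) := by
      conv_lhs => rw [← Real.sq_sqrt hs0.le]
      rw [Real.log_pow]; push_cast; ring
    have e1 : Real.log (Real.sqrt s) ≤ Real.sqrt s - 1 :=
      Real.log_le_sub_one_of_pos hsps
    have e2 : Real.log c = 2 * Real.log s := by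
      conv_lhs => rw [← hsq]
      rw [Real.log_pow]; push_cast; ring
    have := hss
    nlinarith
  have hlog4α : Real.log (4 / α) ≤ 1.7 * (k:ℝ) := by
    have hd : Real.log (4 / α) = Real.log 4 - Real.log α :=
      Real.log_div (by norm_num) (ne_of_gt hα0)
    have hlogα : -(k:ℝ) < Real.log α := by
      have := Real.log_lt_log (Real.exp_pos _) hαk
      rwa [Real.log_exp] at this
    have hlog4 : Real.log 4 ≤ (1.4:ℝ) := by
      rw [show (4:ℝ) = 2 ^ 2 by norm_num, Real.log_pow]
      have := Real.log_two_lt_d9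
      push_cast; nlinarith
    nlinarith
  have hlog4α0 : 0 ≤ Real.log (4 / α) := by
    apply Real.log_nonneg
    rw [le_div_iff₀ hα0]; linarith
  have hlogn0 : (0:ℝ) ≤ Real.log n :=
    Real.log_nonneg (by exact_mod_cast Nat.one_le_of_lt hn)
  have hZ : Real.log n * Real.log (4 / α) ≤ (L:ℝ) * (1.7 * (k:ℝ)) :=
    mul_le_mul hLn hlog4α hlog4α0 (by linarith)
  -- rewrite the RHS as an exponential
  have hRHSpos : (0:ℝ) < 1 / c ^ 2 * (n : ℝ) ^ (-(8 * Real.log (4 / α))) := by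
    have hn0 : (0:ℝ) < (n:ℝ) := by positivity
    positivity
  have hRHS : (1:ℝ) / c ^ 2 * (n : ℝ) ^ (-(8 * Real.log (4 / α)))
      = Real.exp (-(2 * Real.log c) + Real.log n * (-(8 * Real.log (4 / α)))) := by
    have hn0 : (0:ℝ) < (n:ℝ) := by positivity
    rw [Real.rpow_def_of_pos hn0, Real.exp_add]
    congr 1
    rw [Real.exp_neg, show 2 * Real.log c = Real.log (c ^ 2) by
      rw [Real.log_pow]; push_cast; ring, Real.exp_log (by positivity)]
    rw [one_div]
  -- the key numeric inequality
  have hkL0 : (0:ℝ) ≤ (k:ℝ) * (L:ℝ) := by positivity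
  have hkL2 : (2:ℝ) ≤ (k:ℝ) * (L:ℝ) := by nlinarith
  have hP1 : 1000 * ((k:ℝ) * (L:ℝ)) ≤ s * ((k:ℝ) * (L:ℝ)) :=
    mul_le_mul_of_nonneg_right hs hkL0
  have hP2 : 2 * s ≤ s * ((k:ℝ) * (L:ℝ)) := by
    have := mul_le_mul_of_nonneg_left hkL2 hs0.le
    linarith
  have hX0 : (2000:ℝ) ≤ s * ((k:ℝ) * (L:ℝ)) := by linarith
  have hlog2X : 0.6931471803 * (s * ((k:ℝ) * (L:ℝ)))
      ≤ Real.log 2 * (s * ((k:ℝ) * (L:ℝ))) :=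
    mul_le_mul_of_nonneg_right Real.log_two_gt_d9.le (by nlinarith)
  have hfinal : s * k * L / 4
        - Real.log 2 * ((3 / 5 : ℝ) * s * (k : ℝ) * (L : ℝ))
      < -(2 * Real.log c) + Real.log n * (-(8 * Real.log (4 / α))) := by
    nlinarith [hP1, hP2, hX0, hlog2X, hlogc, hZ]
  -- put everything together
  have h1 : (∑ ω ∈ Finset.univ.filter
          (fun ω : Fin (m1 * L) → Bool =>
            (3 / 5 : ℝ) * s * (k : ℝ) * (L : ℝ)
              < ∑ r : Fin (m1 * L), (if ω r = true then (1 : ℝ) else 0)),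
          ∏ r, (if ω r then pval L r.val else 1 - pval L r.val))
      ≤ Real.exp (s * k * L / 4 - Real.log 2 * ((3 / 5 : ℝ) * s * (k : ℝ) * (L : ℝ))) :=
    hchern.trans (Real.exp_le_exp.mpr (by linarith))
  have h2 : Real.exp (s * k * L / 4 - Real.log 2 * ((3 / 5 : ℝ) * s * (k : ℝ) * (L : ℝ)))
      < 1 / c ^ 2 * (n : ℝ) ^ (-(8 * Real.log (4 / α))) := by
    rw [hRHS]
    exact Real.exp_lt_exp.mpr (by linarith)
  exact lt_of_le_of_lt (ENNReal.ofReal_le_ofReal h1)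
    ((ENNReal.ofReal_lt_ofReal_iff hRHSpos).mpr h2)
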